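/- Let P be a fine, sharp additive commutative monoid. Then the strict divisibility relation on P, defined by p < p' if and only if there exists c ∈ P with c ≠ 0 and p + c = p', is well-founded: there is no infinite strictly decreasing sequence p0 > p1 > p2 > ⋯ in P. -/

import Mathlib

/-- A (additive commutative) monoid is sharp if `x + y = 0` implies `x = 0`. -/
def Sharp (M : Type*) [AddCommMonoid M] : Prop :=
  ∀ x y : M, x + y = 0 → x = 0

/-- A monoid is cancellative if `a + c = b + c` implies `a = b`. -/
def Cancellative (M : Type*) [AddCommMonoid M] : Prop :=
  ∀ a b c : M, a + c = b + c → a = b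

/-- In a fine (cancellative and finitely generated), sharp monoid `P`, the strict
divisibility relation `p < p' ↔ ∃ c ≠ 0, p + c = p'` is well-founded: there is no
infinite strictly decreasing sequence. -/
theorem strict_divisibility_wellFounded (P : Type*) [AddCommMonoid P]
    (hPsharp : Sharp P) (hPcanc : Cancellative P) (hPfg : AddMonoid.FG P) :
    WellFounded (fun p p' : P => ∃ c : P, c ≠ 0 ∧ p + c = p') := by
  classical
  obtain ⟨S, hSclos, hSfin⟩ := (AddSubmonoid.fg_iff ⊤).1 hPfg.fg_top
  -- the set of nonzero generators
  set T : Set P := {x | x ∈ S ∧ x ≠ 0} with hTdef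
  have hTfin : T.Finite := hSfin.subset fun x hx => hx.1
  haveI : Finite T := hTfin
  -- the lifting homomorphism
  set φ : (T →₀ ℕ) →+ P := Finsupp.liftAddHom fun s => multiplesHom P s.1 with hφdef
  have hφsingle : ∀ (a : T) (n : ℕ), φ (Finsupp.single a n) = n • (a : P) := by
    intro a n
    simp [hφdef]
  -- surjectivity
  have hsurj : ∀ p : P, ∃ f : T →₀ ℕ, φ f = p := by
    intro p
    have hp : p ∈ AddSubmonoid.closure S := by rw [hSclos]; trivial
    induction hp using AddSubmonoid.closure_induction with
    | mem x hx =>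
      by_cases hx0 : x = 0
      · exact ⟨0, by simp [hx0]⟩
      · exact ⟨Finsupp.single ⟨x, hx, hx0⟩ 1, by simp [hφsingle]⟩
    | zero => exact ⟨0, by simp⟩
    | add x y _ _ hx hy =>
      obtain ⟨f, hf⟩ := hx; obtain ⟨g, hg⟩ := hy
      exact ⟨f + g, by rw [map_add, hf, hg]⟩
  -- sharpness: φ f = 0 → f = 0
  have hker : ∀ f : T →₀ ℕ, φ f = 0 → f = 0 := by
    intro f
    induction f using Finsupp.induction with
    | zero => intro _; rfl
    | single_add a b f ha hb ih =>
      intro h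
      rw [map_add, hφsingle] at h
      have h1 : (b • (a : P)) = 0 := hPsharp _ _ h
      exfalso
      obtain ⟨m, rfl⟩ : ∃ m, b = m + 1 := ⟨b - 1, by omega⟩
      rw [succ_nsmul, add_comm] at h1
      exact a.2.2 (hPsharp _ _ h1)
  -- comparable lifts with equal images are equal
  have hmono : ∀ f g : T →₀ ℕ, f ≤ g → φ f = φ g → f = g := by
    intro f g hle heq
    have h1 : f + (g - f) = g := add_tsub_cancel_of_le hle
    have h2 : φ (g - f) + φ f = 0 + φ f := by
      rw [zero_add, ← map_add, add_comm (g - f) f, h1, heq]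
    have h3 : g - f = 0 := hker _ (hPcanc _ _ _ h2)
    rw [← h1, h3, add_zero]
  -- degree homomorphism
  set D : (T →₀ ℕ) →+ ℕ := Finsupp.liftAddHom fun _ => AddMonoidHom.id ℕ with hDdef
  have hD1 : ∀ u : T →₀ ℕ, u ≠ 0 → 1 ≤ D u := by
    intro u hu
    rcases eq_or_ne (D u) 0 with h | h
    · exfalso
      apply hu
      clear hu
      induction u using Finsupp.induction with
      | zero => rfl
      | single_add a b f ha hb ih =>
        rw [map_add, hDdef] at h
        simp at h
        omega
    · omega
  -- the relation is a strict order
  haveI : IsIrrefl P (fun p p' : P => ∃ c : P, c ≠ 0 ∧ p + c = p') := by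
    refine ⟨?_⟩
    rintro p ⟨x, hx, hpx⟩
    exact hx (hPcanc x 0 p (by rw [zero_add, add_comm]; exact hpx))
  haveI : IsTrans P (fun p p' : P => ∃ c : P, c ≠ 0 ∧ p + c = p') := by
    refine ⟨?_⟩
    rintro a b d ⟨x, hx, hax⟩ ⟨y, hy, hby⟩
    exact ⟨x + y, fun h => hx (hPsharp x y h), by rw [← add_assoc, hax, hby]⟩
  haveI : IsStrictOrder P (fun p p' : P => ∃ c : P, c ≠ 0 ∧ p + c = p') := { }
  -- no descending sequence
  rw [RelEmbedding.wellFounded_iff_isEmpty]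
  refine ⟨fun e => ?_⟩
  have hstep : ∀ n : ℕ, ∃ c : P, c ≠ 0 ∧ e (n + 1) + c = e n := fun n =>
    e.map_rel_iff.2 (Nat.lt_succ_self n)
  choose c hc0 hc using hstep
  choose u hu using fun n => hsurj (c n)
  have hu0 : ∀ n, u n ≠ 0 := by
    intro n h
    exact hc0 n (by rw [← hu n, h, map_zero])
  choose w hw using fun n => hsurj (e n)
  set z : ℕ → (T →₀ ℕ) := fun m => w m + ∑ k ∈ Finset.range m, u k with hzdef
  have hz : ∀ m, φ (z m) = e 0 := by
    intro m
    induction m with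
    | zero => simp [hzdef, hw]
    | succ m ih =>
      rw [← ih]
      simp only [hzdef, Finset.sum_range_succ, map_add, hw, hu]
      rw [← hc m]
      abel
  have hzD : ∀ m, m ≤ D (z m) := by
    intro m
    have : (∑ k ∈ Finset.range m, 1) ≤ D (∑ k ∈ Finset.range m, u k) := by
      rw [map_sum]
      exact Finset.sum_le_sum fun k _ => hD1 _ (hu0 k)
    simp only [Finset.sum_const, Finset.card_range, smul_eq_mul, mul_one] at this
    calc m ≤ D (∑ k ∈ Finset.range m, u k) := this
      _ ≤ D (w m) + D (∑ k ∈ Finset.range m, u k) := Nat.le_add_left _ _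
      _ = D (z m) := (map_add D _ _).symm
  obtain ⟨g, hg⟩ := (Set.isPWO_of_wellQuasiOrderedLE (Set.univ : Set (T →₀ ℕ))).exists_monotone_subseq (f := z)
    (fun n => Set.mem_univ _)
  have hzeq : ∀ k, z (g k) = z (g 0) := by
    intro k
    have h01 : z (g 0) ≤ z (g k) := hg (Nat.zero_le k)
    exact (hmono _ _ h01 (by rw [hz, hz])).symm
  set N := D (z (g 0)) + 1 with hN
  have h1 : N ≤ g N := (g.strictMono.le_apply)
  have h2 : g N ≤ D (z (g N)) := hzD _
  rw [hzeq N] at h2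
  omega
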